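/- Let C ⊆ 𝔽₂ⁿ be a singly-even self-dual binary code and δ = (1,...,1)/√2. The two orbifold lattices Λ⁺ = Λ_even ∪ (Λ_even + δ/2) and Λ⁻ = Λ_even ∪ (Λ_odd + δ/2) are isomorphic as lattices: there is an orthogonal transformation of ℝⁿ (a reflection of coordinates determined by a fixed singly-even codeword t ∈ C) mapping Λ⁺ onto Λ⁻. -/

import Mathlib

open scoped BigOperators

namespace PaperFormal

/-- Standard dot product on `ℝⁿ`. -/
def dot {n : ℕ} (x y : Fin n → ℝ) : ℝ := ∑ i, x i * y i

/-- Squared norm. -/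
def nsq {n : ℕ} (x : Fin n → ℝ) : ℝ := dot x x

/-- The dual of a set of vectors: all vectors pairing integrally with every element. -/
def dualSet {n : ℕ} (L : Set (Fin n → ℝ)) : Set (Fin n → ℝ) :=
  {x | ∀ l ∈ L, ∃ k : ℤ, dot l x = (k : ℝ)}

/-- The even-norm part `Λ₀` of a lattice. -/
def evenSub {n : ℕ} (L : Set (Fin n → ℝ)) : Set (Fin n → ℝ) :=
  {l | l ∈ L ∧ ∃ k : ℤ, dot l l = 2 * (k : ℝ)}

/-- The shadow `S(Λ) = Λ₀* \ Λ`. -/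
def shadow {n : ℕ} (L : Set (Fin n → ℝ)) : Set (Fin n → ℝ) :=
  dualSet (evenSub L) \ L

/-- An odd self-dual lattice: equal to its dual, and containing a vector of odd norm. -/
def IsOddSelfDual {n : ℕ} (L : Set (Fin n → ℝ)) : Prop :=
  L = dualSet L ∧ ∃ v ∈ L, ∃ k : ℤ, dot v v = 2 * (k : ℝ) + 1

/-- `χ` is a characteristic vector of `L`: `λ·λ ≡ χ·λ (mod 2)` for all `λ ∈ L`. -/
def IsCharacteristic {n : ℕ} (L : Set (Fin n → ℝ)) (χ : Fin n → ℝ) : Prop :=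
  χ ∈ L ∧ ∀ l ∈ L, ∃ k : ℤ, dot l l - dot χ l = 2 * (k : ℝ)

/-- `Λ_{δ-even}`. -/
def deltaEven {n : ℕ} (L : Set (Fin n → ℝ)) (δ : Fin n → ℝ) : Set (Fin n → ℝ) :=
  {l | l ∈ L ∧ ∃ k : ℤ, dot δ l = 2 * (k : ℝ)}

/-- `Λ_{δ-odd}`. -/
def deltaOdd {n : ℕ} (L : Set (Fin n → ℝ)) (δ : Fin n → ℝ) : Set (Fin n → ℝ) :=
  {l | l ∈ L ∧ ∃ k : ℤ, dot δ l = 2 * (k : ℝ) + 1}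

/-- Translate a set of vectors by `v`. -/
def shiftSet {n : ℕ} (A : Set (Fin n → ℝ)) (v : Fin n → ℝ) : Set (Fin n → ℝ) :=
  (fun x => x + v) '' A

/-- The orbifold lattice `Λ⁺ = Λ_even ∪ (Λ_even + δ/2)`. -/
def orbPlus {n : ℕ} (L : Set (Fin n → ℝ)) (δ : Fin n → ℝ) : Set (Fin n → ℝ) :=
  deltaEven L δ ∪ shiftSet (deltaEven L δ) ((2 : ℝ)⁻¹ • δ)

/-- The orbifold lattice `Λ⁻ = Λ_even ∪ (Λ_odd + δ/2)`. -/
def orbMinus {n : ℕ} (L : Set (Fin n → ℝ)) (δ : Fin n → ℝ) : Set (Fin n → ℝ) :=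
  deltaEven L δ ∪ shiftSet (deltaOdd L δ) ((2 : ℝ)⁻¹ • δ)

/-- The gauging condition for a shift vector: `δ ∈ Λ`, `δ/2 ∉ Λ ∪ S(Λ)`, `δ² ∈ 4ℤ`. -/
def GaugingCondition {n : ℕ} (L : Set (Fin n → ℝ)) (δ : Fin n → ℝ) : Prop :=
  δ ∈ L ∧ (2 : ℝ)⁻¹ • δ ∉ L ∧ (2 : ℝ)⁻¹ • δ ∉ shadow L ∧
    ∃ k : ℤ, dot δ δ = 4 * (k : ℝ)

/-- Inner product of codewords, valued in `ℤ/k`. -/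
def codeDot {n k : ℕ} (c c' : Fin n → ZMod k) : ZMod k := ∑ i, c i * c' i

/-- The dual code. -/
def dualCode {n k : ℕ} (C : Set (Fin n → ZMod k)) : Set (Fin n → ZMod k) :=
  {x | ∀ c ∈ C, codeDot c x = 0}

/-- Hamming weight of a binary codeword. -/
def wt {n : ℕ} (c : Fin n → ZMod 2) : ℕ :=
  (Finset.univ.filter fun i => c i = 1).card

/-- A singly-even self-dual binary code: self-dual, with some codeword of weight `≢ 0 (mod 4)`. -/
def IsSinglyEvenSelfDual {n : ℕ} (C : Set (Fin n → ZMod 2)) : Prop :=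
  C = dualCode C ∧ ∃ c ∈ C, ¬ (4 ∣ wt c)

/-- Lift of a binary codeword to `{0,1}ⁿ ⊆ ℝⁿ`. -/
def liftBin {n : ℕ} (c : Fin n → ZMod 2) : Fin n → ℝ := fun i => ((c i).val : ℝ)

/-- Construction A lattice of a binary code: `Λ(C) = {(c + 2m)/√2}`. -/
def constructionA {n : ℕ} (C : Set (Fin n → ZMod 2)) : Set (Fin n → ℝ) :=
  {x | ∃ c ∈ C, ∃ m : Fin n → ℤ,
    x = fun i => (liftBin c i + 2 * (m i : ℝ)) / Real.sqrt 2}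

/-- Construction A lattice of a `ℤ/k` code: `Λ(C) = {(c + km)/√k}`. -/
def constructionAZ {n : ℕ} (k : ℕ) (C : Set (Fin n → ZMod k)) : Set (Fin n → ℝ) :=
  {x | ∃ c ∈ C, ∃ m : Fin n → ℤ,
    x = fun i => (((c i).val : ℝ) + (k : ℝ) * (m i : ℝ)) / Real.sqrt k}

/-- The shift vector `δ = (1,…,1)/√2`. -/
noncomputable def deltaAll (n : ℕ) : Fin n → ℝ := fun _ => 1 / Real.sqrt 2

/-- Theta function of a set of vectors, `Θ_L(q) = Σ_{λ∈L} q^{λ²/2}`. -/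
noncomputable def thetaSet {n : ℕ} (L : Set (Fin n → ℝ)) (q : ℝ) : ℝ :=
  ∑' l : L, q ^ (dot (l : Fin n → ℝ) (l : Fin n → ℝ) / 2)

/-- Jacobi theta function `θ₂(q) = Σ_m q^{(m+1/2)²/2}`. -/
noncomputable def theta2 (q : ℝ) : ℝ := ∑' m : ℤ, q ^ (((m : ℝ) + 1 / 2) ^ 2 / 2)

/-- Jacobi theta function `θ₃(q) = Σ_m q^{m²/2}`. -/
noncomputable def theta3 (q : ℝ) : ℝ := ∑' m : ℤ, q ^ ((m : ℝ) ^ 2 / 2)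

/-- Jacobi theta function `θ₄(q) = Σ_m (−1)^m q^{m²/2}`. -/
noncomputable def theta4 (q : ℝ) : ℝ := ∑' m : ℤ, (-1 : ℝ) ^ m * q ^ ((m : ℝ) ^ 2 / 2)

/-- `ℤⁿ₊`: integer vectors with even coordinate sum. -/
def intEven (n : ℕ) : Set (Fin n → ℤ) := {m | Even (∑ i, m i)}

/-- `ℤⁿ₋`: integer vectors with odd coordinate sum. -/
def intOdd (n : ℕ) : Set (Fin n → ℤ) := {m | Odd (∑ i, m i)}

/-- The doubly-even subcode `C₀` of a binary code. -/
def doublyEvenSub {n : ℕ} (C : Set (Fin n → ZMod 2)) : Set (Fin n → ZMod 2) :=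
  {c | c ∈ C ∧ wt c % 4 = 0}

/-- The code shadow `S(C) = C₀⊥ \ C`. -/
def codeShadow {n : ℕ} (C : Set (Fin n → ZMod 2)) : Set (Fin n → ZMod 2) :=
  dualCode (doublyEvenSub C) \ C

-- auxiliary section to be inserted before the theorem
section Aux

variable {n : ℕ}

private lemma val_ite : ∀ a : ZMod 2, (a.val : ℤ) = if a = 1 then 1 else 0 := by decide

private lemma not_one : ∀ a : ZMod 2, ¬ a = 1 → a = 0 := by decide

private lemma val_iteR : ∀ a : ZMod 2, (a.val : ℝ) = if a = 1 then 1 else 0 := by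
  intro a
  by_cases h : a = 1
  · rw [if_pos h, h]
    norm_num [show (1 : ZMod 2).val = 1 from rfl]
  · rw [if_neg h, not_one a h]
    norm_num [show (0 : ZMod 2).val = 0 from rfl]

private lemma addval : ∀ a b : ZMod 2,
    ((a + b).val : ℤ) = (a.val : ℤ) + (b.val : ℤ) - 2 * ((a.val : ℤ) * (b.val : ℤ)) := by decide

private lemma mul_ite_zmod : ∀ a b : ZMod 2, a * b = if a = 1 ∧ b = 1 then 1 else 0 := by decide

private lemma valmul_ite : ∀ a b : ZMod 2,
    (a.val : ℤ) * (b.val : ℤ) = if a = 1 ∧ b = 1 then 1 else 0 := by decide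

private lemma ite_val : ∀ a b : ZMod 2,
    (if a = 1 then (b.val : ℤ) else 0) = if a = 1 ∧ b = 1 then 1 else 0 := by decide

private lemma s2 : Real.sqrt 2 * Real.sqrt 2 = 2 := Real.mul_self_sqrt (by norm_num)

private lemma s2ne : Real.sqrt 2 ≠ 0 := by positivity

/-- canonical representative of a construction A lattice vector -/
private noncomputable def rep (c : Fin n → ZMod 2) (m : Fin n → ℤ) : Fin n → ℝ :=
  fun i => (liftBin c i + 2 * (m i : ℝ)) / Real.sqrt 2

/-- the coordinate reflection -/
private def reflT (t : Fin n → ZMod 2) (x : Fin n → ℝ) : Fin n → ℝ :=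
  fun i => if t i = 1 then -(x i) else x i

private lemma reflT_invol (t : Fin n → ZMod 2) (x : Fin n → ℝ) : reflT t (reflT t x) = x := by
  funext i
  simp only [reflT]
  split <;> simp

private lemma sum_val_int (c : Fin n → ZMod 2) : (∑ i, ((c i).val : ℤ)) = (wt c : ℤ) := by
  rw [Finset.sum_congr rfl fun i _ => val_ite (c i), Finset.sum_boole, wt]

private lemma sum_liftBin (c : Fin n → ZMod 2) : (∑ i, liftBin c i) = (wt c : ℝ) := by
  unfold liftBin
  rw [Finset.sum_congr rfl fun i _ => val_iteR (c i), Finset.sum_boole, wt]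

private lemma sum_valmul (t c : Fin n → ZMod 2) :
    (∑ i, ((t i).val : ℤ) * ((c i).val : ℤ))
      = ((Finset.univ.filter fun i => t i = 1 ∧ c i = 1).card : ℤ) := by
  rw [Finset.sum_congr rfl fun i _ => valmul_ite (t i) (c i), Finset.sum_boole]

private lemma codeDot_card (t c : Fin n → ZMod 2) :
    codeDot t c = ((Finset.univ.filter fun i => t i = 1 ∧ c i = 1).card : ZMod 2) := by
  unfold codeDot
  rw [Finset.sum_congr rfl fun i _ => mul_ite_zmod (t i) (c i), Finset.sum_boole]

private lemma cross_even {C : Set (Fin n → ZMod 2)} (hC : C = dualCode C)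
    {t c : Fin n → ZMod 2} (ht : t ∈ C) (hc : c ∈ C) :
    ∃ a : ℕ, (Finset.univ.filter fun i => t i = 1 ∧ c i = 1).card = 2 * a := by
  have hc' : c ∈ dualCode C := by rw [← hC]; exact hc
  have h0 : codeDot t c = 0 := hc' t ht
  rw [codeDot_card] at h0
  exact (ZMod.natCast_eq_zero_iff _ 2).1 h0

private lemma mem_add {C : Set (Fin n → ZMod 2)} (hC : C = dualCode C)
    {a b : Fin n → ZMod 2} (ha : a ∈ C) (hb : b ∈ C) : a + b ∈ C := by
  rw [hC]
  intro c' hc'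
  have ha' : a ∈ dualCode C := by rw [← hC]; exact ha
  have hb' : b ∈ dualCode C := by rw [← hC]; exact hb
  have h1 : codeDot c' a = 0 := ha' c' hc'
  have h2 : codeDot c' b = 0 := hb' c' hc'
  unfold codeDot at h1 h2 ⊢
  simp only [Pi.add_apply, mul_add, Finset.sum_add_distrib, h1, h2, add_zero]

private lemma wt_add (c t : Fin n → ZMod 2) :
    ((wt (c + t) : ℤ)) = (wt c : ℤ) + (wt t : ℤ)
      - 2 * ((Finset.univ.filter fun i => t i = 1 ∧ c i = 1).card : ℤ) := by
  have h1 : ((wt (c + t) : ℤ)) = ∑ i, ((c i + t i).val : ℤ) := by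
    rw [← sum_val_int (c + t)]
    exact Finset.sum_congr rfl fun i _ => rfl
  rw [h1, Finset.sum_congr rfl fun i _ => addval (c i) (t i),
    Finset.sum_sub_distrib, Finset.sum_add_distrib, ← Finset.mul_sum]
  have h2 : (∑ i, ((c i).val : ℤ) * ((t i).val : ℤ))
      = ∑ i, ((t i).val : ℤ) * ((c i).val : ℤ) :=
    Finset.sum_congr rfl fun i _ => mul_comm _ _
  rw [h2, sum_valmul, sum_val_int, sum_val_int]

private lemma dot_delta (c : Fin n → ZMod 2) (m : Fin n → ℤ) :
    dot (deltaAll n) (rep c m) = ((wt c : ℝ) + 2 * ∑ i, (m i : ℝ)) / 2 := by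
  unfold dot deltaAll rep
  have h : ∀ i : Fin n, (1 / Real.sqrt 2) * ((liftBin c i + 2 * (m i : ℝ)) / Real.sqrt 2)
      = (liftBin c i + 2 * (m i : ℝ)) / 2 := by
    intro i
    rw [div_mul_div_comm, one_mul, s2]
  rw [Finset.sum_congr rfl fun i _ => h i, ← Finset.sum_div, Finset.sum_add_distrib,
    ← Finset.mul_sum, sum_liftBin]

private lemma masterR {C : Set (Fin n → ZMod 2)} (hC : C = dualCode C)
    {t : Fin n → ZMod 2} (ht : t ∈ C) {c : Fin n → ZMod 2} (hc : c ∈ C) (m : Fin n → ℤ) :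
    ∃ m' : Fin n → ℤ, reflT t (rep c m) = rep c m' ∧
      ∃ j : ℤ, (∑ i, m' i) = (∑ i, m i) + 2 * j := by
  obtain ⟨a, ha⟩ := cross_even hC ht hc
  refine ⟨fun i => if t i = 1 then -(m i) - ((c i).val : ℤ) else m i, ?_, ?_⟩
  · funext i
    simp only [reflT, rep, liftBin]
    by_cases h : t i = 1
    · simp only [if_pos h]
      rw [← neg_div]
      congr 1
      push_cast
      ring
    · simp only [if_neg h]
  · refine ⟨-(∑ i ∈ Finset.univ.filter (fun i => t i = 1), m i) - (a : ℤ), ?_⟩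
    have h1 : ∀ i : Fin n, (if t i = 1 then -(m i) - ((c i).val : ℤ) else m i)
        = m i + (if t i = 1 then (-2) * m i - ((c i).val : ℤ) else 0) := by
      intro i; split <;> ring
    rw [Finset.sum_congr rfl fun i _ => h1 i, Finset.sum_add_distrib, ← Finset.sum_filter,
      Finset.sum_sub_distrib, ← Finset.mul_sum]
    have h3 : (∑ i ∈ Finset.univ.filter (fun i => t i = 1), ((c i).val : ℤ))
        = ((Finset.univ.filter fun i => t i = 1 ∧ c i = 1).card : ℤ) := by
      rw [Finset.sum_filter, Finset.sum_congr rfl fun i _ => ite_val (t i) (c i),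
        Finset.sum_boole]
    rw [h3]
    have ha' : ((Finset.univ.filter fun i => t i = 1 ∧ c i = 1).card : ℤ) = 2 * (a : ℤ) := by
      exact_mod_cast ha
    rw [ha']
    ring

private lemma masterT {C : Set (Fin n → ZMod 2)} (hC : C = dualCode C)
    {t : Fin n → ZMod 2} (ht : t ∈ C) (ht2 : wt t % 4 = 2)
    {c : Fin n → ZMod 2} (hc : c ∈ C) (m : Fin n → ℤ) :
    ∃ m'' : Fin n → ℤ,
      reflT t (rep c m + (2 : ℝ)⁻¹ • deltaAll n) = rep (c + t) m'' + (2 : ℝ)⁻¹ • deltaAll n ∧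
      ∃ j : ℤ, dot (deltaAll n) (rep (c + t) m'')
        = dot (deltaAll n) (rep c m) + 2 * (j : ℝ) + 1 := by
  obtain ⟨s, hs⟩ : ∃ s, wt t = 4 * s + 2 := ⟨wt t / 4, by omega⟩
  obtain ⟨a, ha⟩ := cross_even hC ht hc
  refine ⟨fun i => if t i = 1 then -(m i) - 1 else m i, ?_, ?_⟩
  · funext i
    simp only [reflT, rep, liftBin, Pi.add_apply, Pi.smul_apply, smul_eq_mul, deltaAll]
    have hval : ((c i + t i).val : ℝ)
        = ((c i).val : ℝ) + ((t i).val : ℝ) - 2 * (((c i).val : ℝ) * ((t i).val : ℝ)) := by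
      exact_mod_cast addval (c i) (t i)
    by_cases h : t i = 1
    · have ht1 : ((t i).val : ℝ) = 1 := by
        rw [h]; norm_num [ZMod.val_one]
      simp only [if_pos h]
      rw [hval, ht1]
      push_cast
      rw [mul_one_div, ← add_div, ← add_div, ← neg_div]
      congr 1
      ring
    · have h0 : t i = 0 := not_one _ h
      have ht0 : ((t i).val : ℝ) = 0 := by rw [h0]; simp
      simp only [if_neg h]
      rw [hval, ht0]
      ring
  · refine ⟨-(∑ i ∈ Finset.univ.filter (fun i => t i = 1), m i) - (a : ℤ) - (s : ℤ) - 1, ?_⟩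
    rw [dot_delta, dot_delta]
    have hwtR : ((wt (c + t) : ℝ)) = (wt c : ℝ) + (wt t : ℝ)
        - 2 * ((Finset.univ.filter fun i => t i = 1 ∧ c i = 1).card : ℝ) := by
      exact_mod_cast wt_add c t
    have haR : ((Finset.univ.filter fun i => t i = 1 ∧ c i = 1).card : ℝ) = 2 * (a : ℝ) := by
      exact_mod_cast ha
    have hsR : ((wt t : ℝ)) = 4 * (s : ℝ) + 2 := by exact_mod_cast hs
    have hsum : (∑ i, (if t i = 1 then -(m i) - 1 else m i)) = (∑ i, m i)
        - 2 * (∑ i ∈ Finset.univ.filter (fun i => t i = 1), m i) - (wt t : ℤ) := by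
      have h1 : ∀ i : Fin n, (if t i = 1 then -(m i) - 1 else m i)
          = m i + (if t i = 1 then (-2) * m i - 1 else 0) := by
        intro i; split <;> ring
      rw [Finset.sum_congr rfl fun i _ => h1 i, Finset.sum_add_distrib, ← Finset.sum_filter,
        Finset.sum_sub_distrib, ← Finset.mul_sum]
      have h2 : (∑ _i ∈ Finset.univ.filter (fun i => t i = 1), (1 : ℤ)) = (wt t : ℤ) := by
        rw [Finset.sum_const, wt]
        simp
      rw [h2]
      ring
    have hsumR : (∑ i, ((if t i = 1 then -(m i) - 1 else m i : ℤ) : ℝ)) = (∑ i, (m i : ℝ))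
        - 2 * (∑ i ∈ Finset.univ.filter (fun i => t i = 1), (m i : ℝ)) - (wt t : ℝ) := by
      exact_mod_cast hsum
    push_cast
    push_cast at hsumR
    rw [hsumR, hwtR, haR, hsR]
    ring

private lemma reflT_deltaEven {C : Set (Fin n → ZMod 2)} (hC : C = dualCode C)
    {t : Fin n → ZMod 2} (ht : t ∈ C) {x : Fin n → ℝ}
    (hx : x ∈ deltaEven (constructionA C) (deltaAll n)) :
    reflT t x ∈ deltaEven (constructionA C) (deltaAll n) := by
  obtain ⟨⟨c, hc, m, rfl⟩, k, hk⟩ := hx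
  obtain ⟨m', hm', j, hj⟩ := masterR hC ht hc m
  suffices h : reflT t (rep c m) ∈ deltaEven (constructionA C) (deltaAll n) from h
  rw [hm']
  refine ⟨⟨c, hc, m', rfl⟩, k + j, ?_⟩
  have hk' : dot (deltaAll n) (rep c m) = 2 * (k : ℝ) := hk
  rw [dot_delta] at hk' ⊢
  have hjR : (∑ i, (m' i : ℝ)) = (∑ i, (m i : ℝ)) + 2 * (j : ℝ) := by exact_mod_cast hj
  rw [hjR]
  push_cast
  linarith

private lemma reflT_shiftEO {C : Set (Fin n → ZMod 2)} (hC : C = dualCode C)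
    {t : Fin n → ZMod 2} (ht : t ∈ C) (ht2 : wt t % 4 = 2) {x : Fin n → ℝ}
    (hx : x ∈ shiftSet (deltaEven (constructionA C) (deltaAll n)) ((2 : ℝ)⁻¹ • deltaAll n)) :
    reflT t x ∈ shiftSet (deltaOdd (constructionA C) (deltaAll n)) ((2 : ℝ)⁻¹ • deltaAll n) := by
  obtain ⟨y, ⟨⟨c, hc, m, rfl⟩, k, hk⟩, rfl⟩ := hx
  obtain ⟨m'', hfun, j, hj⟩ := masterT hC ht ht2 hc m
  suffices h : reflT t (rep c m + (2 : ℝ)⁻¹ • deltaAll n)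
      ∈ shiftSet (deltaOdd (constructionA C) (deltaAll n)) ((2 : ℝ)⁻¹ • deltaAll n) from h
  rw [hfun]
  refine ⟨rep (c + t) m'', ⟨⟨c + t, mem_add hC hc ht, m'', rfl⟩, k + j, ?_⟩, rfl⟩
  have hk' : dot (deltaAll n) (rep c m) = 2 * (k : ℝ) := hk
  rw [hj, hk']
  push_cast
  ring

private lemma reflT_shiftOE {C : Set (Fin n → ZMod 2)} (hC : C = dualCode C)
    {t : Fin n → ZMod 2} (ht : t ∈ C) (ht2 : wt t % 4 = 2) {x : Fin n → ℝ}
    (hx : x ∈ shiftSet (deltaOdd (constructionA C) (deltaAll n)) ((2 : ℝ)⁻¹ • deltaAll n)) :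
    reflT t x ∈ shiftSet (deltaEven (constructionA C) (deltaAll n)) ((2 : ℝ)⁻¹ • deltaAll n) := by
  obtain ⟨y, ⟨⟨c, hc, m, rfl⟩, k, hk⟩, rfl⟩ := hx
  obtain ⟨m'', hfun, j, hj⟩ := masterT hC ht ht2 hc m
  suffices h : reflT t (rep c m + (2 : ℝ)⁻¹ • deltaAll n)
      ∈ shiftSet (deltaEven (constructionA C) (deltaAll n)) ((2 : ℝ)⁻¹ • deltaAll n) from h
  rw [hfun]
  refine ⟨rep (c + t) m'', ⟨⟨c + t, mem_add hC hc ht, m'', rfl⟩, k + j + 1, ?_⟩, rfl⟩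
  have hk' : dot (deltaAll n) (rep c m) = 2 * (k : ℝ) + 1 := hk
  rw [hj, hk']
  push_cast
  ring

end Aux

/-- the coordinate reflection determined by a singly-even codeword `t ∈ C`
maps `Λ⁺` onto `Λ⁻`. -/
theorem orbPlus_isometric_orbMinus {n : ℕ} (C : Set (Fin n → ZMod 2))
    (hC : IsSinglyEvenSelfDual C) (t : Fin n → ZMod 2) (ht : t ∈ C)
    (ht2 : wt t % 4 = 2) :
    (fun x : Fin n → ℝ => fun i => if t i = 1 then -(x i) else x i) ''
        orbPlus (constructionA C) (deltaAll n)
      = orbMinus (constructionA C) (deltaAll n) := by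
  obtain ⟨hCd, -⟩ := hC
  show reflT t '' orbPlus (constructionA C) (deltaAll n) = orbMinus (constructionA C) (deltaAll n)
  unfold orbPlus orbMinus
  rw [Set.image_union]
  have h1 : reflT t '' deltaEven (constructionA C) (deltaAll n)
      = deltaEven (constructionA C) (deltaAll n) := by
    apply Set.Subset.antisymm
    · rintro _ ⟨y, hy, rfl⟩
      exact reflT_deltaEven hCd ht hy
    · intro y hy
      exact ⟨reflT t y, reflT_deltaEven hCd ht hy, reflT_invol t y⟩
  have h2 : reflT t '' shiftSet (deltaEven (constructionA C) (deltaAll n)) ((2 : ℝ)⁻¹ • deltaAll n)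
      = shiftSet (deltaOdd (constructionA C) (deltaAll n)) ((2 : ℝ)⁻¹ • deltaAll n) := by
    apply Set.Subset.antisymm
    · rintro _ ⟨y, hy, rfl⟩
      exact reflT_shiftEO hCd ht ht2 hy
    · intro y hy
      exact ⟨reflT t y, reflT_shiftOE hCd ht ht2 hy, reflT_invol t y⟩
  rw [h1, h2]


end PaperFormal
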